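/- arXiv:2602.13735 — 5 statements merged into one kernel-verified Lean document; each statement's English description precedes it below -/
import Mathlib

section
/- Let u ≥ 1 and m ≥ 1, and let a_0, a_1, …, a_m be natural numbers such that a_i < 2^u for every i ∈ [0..m] and a_{i−1} ≠ a_i for every i ∈ [1..m]. Define b_i = vbit(a_{i−1}, a_i) for i ∈ [1..m]. Then b_{i−1} ≠ b_i for every i ∈ [2..m], and b_i < 2u for every i ∈ [1..m]. -/
open scoped Classical

/-- `lbit x y` is the least index `i` such that the `i`-th binary digits of `x` and `y`
differ (defined as `0` if `x = y`). -/
noncomputable def lbit (x y : ℕ) : ℕ :=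
  if h : ∃ i, x.testBit i ≠ y.testBit i then Nat.find h else 0

/-- `vbit x y = 2 * lbit x y + a`, where `a` is the bit of `x` at position `lbit x y`. -/
noncomputable def vbit (x y : ℕ) : ℕ :=
  2 * lbit x y + (if Nat.testBit x (lbit x y) then 1 else 0)

lemma exists_diff (x y : ℕ) (h : x ≠ y) : ∃ i, x.testBit i ≠ y.testBit i := by
  by_contra hc
  push_neg at hc
  exact h (Nat.eq_of_testBit_eq hc)

lemma lbit_spec (x y : ℕ) (h : x ≠ y) :
    x.testBit (lbit x y) ≠ y.testBit (lbit x y) := by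
  have he := exists_diff x y h
  rw [lbit, dif_pos he]
  exact Nat.find_spec he

lemma lbit_lt (x y u : ℕ) (hu : 1 ≤ u) (hx : x < 2 ^ u) (hy : y < 2 ^ u) (h : x ≠ y) :
    lbit x y < u := by
  by_contra hc
  push_neg at hc
  have hxb : x.testBit (lbit x y) = false := Nat.testBit_lt_two_pow (lt_of_lt_of_le hx (Nat.pow_le_pow_right (by norm_num) hc))
  have hyb : y.testBit (lbit x y) = false := Nat.testBit_lt_two_pow (lt_of_lt_of_le hy (Nat.pow_le_pow_right (by norm_num) hc))
  exact lbit_spec x y h (hxb.trans hyb.symm)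

/-- Given a sequence `a_0, …, a_m` of naturals below `2^u` with adjacent elements distinct,
the sequence `b_i = vbit (a_{i-1}) (a_i)` (for `i ∈ [1..m]`) has adjacent elements distinct
and all its elements are below `2 * u`. -/
theorem stmt0 (u m : ℕ) (hu : 1 ≤ u) (hm : 1 ≤ m) (a b : ℕ → ℕ)
    (ha : ∀ i ≤ m, a i < 2 ^ u)
    (hne : ∀ i, 1 ≤ i → i ≤ m → a (i - 1) ≠ a i)
    (hb : ∀ i, 1 ≤ i → i ≤ m → b i = vbit (a (i - 1)) (a i)) :
    (∀ i, 2 ≤ i → i ≤ m → b (i - 1) ≠ b i) ∧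
    (∀ i, 1 ≤ i → i ≤ m → b i < 2 * u) := by
  constructor
  · intro i h2 him heq
    have h1 : 1 ≤ i := le_trans (by norm_num) h2
    have h1' : 1 ≤ i - 1 := by omega
    have him' : i - 1 ≤ m := by omega
    rw [hb (i-1) h1' him', hb i h1 him] at heq
    set x := a (i - 1 - 1)
    set y := a (i - 1)
    set z := a i
    have hxy : x ≠ y := hne (i-1) h1' him'
    have hyz : y ≠ z := hne i h1 him
    have hl : lbit x y = lbit y z := by
      unfold vbit at heq
      split_ifs at heq <;> omega
    have hbit : x.testBit (lbit x y) = y.testBit (lbit y z) := by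
      unfold vbit at heq
      split_ifs at heq with hA hB hA hB <;> simp_all
    rw [← hl] at hbit
    exact lbit_spec x y hxy hbit
  · intro i h1 him
    have h1' : i - 1 ≤ m := by omega
    rw [hb i h1 him]
    have := lbit_lt (a (i-1)) (a i) u hu (ha _ h1') (ha _ him) (hne i h1 him)
    unfold vbit
    split_ifs <;> omega
end

section
/- Let s be a string of length n, let 0 ≤ p ≤ q < n, and suppose that the substring s[p..q] has no occurrence in s at any position i < p. Let K and h be such that h ≤ p, q < h + K, and h + K ≤ n. Then the substring s[h..h+K) has no occurrence in s at any position i < h. -/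
/-- If the substring `s[p..q]` of a length-`n` string `s` has no occurrence at any
position `i < p`, and `[h..h+K)` is a window (within the string) covering `[p..q]`,
then the substring `s[h..h+K)` has no occurrence at any position `i < h`. -/
theorem stmt5 {α : Type*} (s : ℕ → α) (n p q K h : ℕ)
    (hpq : p ≤ q) (hqn : q < n)
    (hno : ∀ i < p, ¬(∀ j ≤ q - p, s (i + j) = s (p + j)))
    (hhp : h ≤ p) (hqh : q < h + K) (hKn : h + K ≤ n) :
    ∀ i < h, ¬(∀ j < K, s (i + j) = s (h + j)) := by
  intro i hi hall
  apply hno (i + (p - h)) (by omega)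
  intro j hj
  have h1 : i + (p - h) + j = i + ((p - h) + j) := by omega
  have h2 : p + j = h + ((p - h) + j) := by omega
  rw [h1, h2]
  exact hall _ (by omega)
end

section
/- Let s be a string of length n, let 0 ≤ p ≤ q < n, and suppose that the substring s[p..q] has no occurrence in s at any position i < p. Let K, h₁, h₂ be such that h₁ < h₂ ≤ p, q < h₁ + K, and h₂ + K ≤ n. Then s[h₁..h₁+K) ≠ s[h₂..h₂+K), i.e., the two length-K windows covering s[p..q] are distinct as strings. -/
/-- If the substring `s[p..q]` of a length-`n` string `s` has no occurrence at any
position `i < p`, then two distinct length-`K` windows `[h₁..h₁+K)` and `[h₂..h₂+K)`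
covering `[p..q]` (with `h₁ < h₂ ≤ p` and `q < h₁ + K`, `h₂ + K ≤ n`) are distinct
as strings. -/
theorem stmt6 {α : Type*} (s : ℕ → α) (n p q K h₁ h₂ : ℕ)
    (hpq : p ≤ q) (hqn : q < n)
    (hno : ∀ i < p, ¬(∀ j ≤ q - p, s (i + j) = s (p + j)))
    (h12 : h₁ < h₂) (h2p : h₂ ≤ p) (hqh : q < h₁ + K) (hKn : h₂ + K ≤ n) :
    ¬(∀ j < K, s (h₁ + j) = s (h₂ + j)) := by
  intro heq
  set d := h₂ - h₁ with hd
  have hip : p - d < p := by omega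
  apply hno (p - d) hip
  intro j hj
  have ht : p - d + j - h₁ < K := by omega
  have := heq (p - d + j - h₁) ht
  have e1 : h₁ + (p - d + j - h₁) = p - d + j := by omega
  have e2 : h₂ + (p - d + j - h₁) = p + j := by omega
  rw [e1, e2] at this
  exact this
end

section
/- Let s be a string of length n, let 0 ≤ a ≤ b < n, and suppose that the substring s[a..b] has no occurrence in s at any position i < a. Let K be such that b − a < K ≤ b + 1 and a + K ≤ n. Then s has at least K − (b − a) distinct substrings of length K, i.e., d_K(s) ≥ K − (b − a). -/
/-- `numDistinctSubstrings s n K` is the number of distinct substrings of length `K`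
of the length-`n` string `s` (each substring of length `K` starting at a position
`h` with `h + K ≤ n` is viewed as a function `Fin K → α`). -/
def numDistinctSubstrings {α : Type*} [DecidableEq α] (s : ℕ → α) (n K : ℕ) : ℕ :=
  ((Finset.range (n + 1 - K)).image (fun h => fun j : Fin K => s (h + (j : ℕ)))).card

/-- If the substring `s[a..b]` has no occurrence at any position `i < a`, and
`b - a < K ≤ b + 1` with `a + K ≤ n`, then `s` has at least `K - (b - a)` distinct
substrings of length `K`. -/
theorem stmt7 {α : Type*} [DecidableEq α] (s : ℕ → α) (n a b K : ℕ)
    (hab : a ≤ b) (hbn : b < n)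
    (hno : ∀ i < a, ¬(∀ j ≤ b - a, s (i + j) = s (a + j)))
    (hK1 : b - a < K) (hK2 : K ≤ b + 1) (hKn : a + K ≤ n) :
    K - (b - a) ≤ numDistinctSubstrings s n K := by
  classical
  set f : ℕ → (Fin K → α) := fun h => fun j : Fin K => s (h + (j : ℕ)) with hf
  set T : Finset ℕ := Finset.Icc (b + 1 - K) a with hT
  -- key: f is injective on T
  have key : ∀ h1 ∈ T, ∀ h2 ∈ T, h1 < h2 → f h1 ≠ f h2 := by
    intro h1 hh1 h2 hh2 hlt heq
    simp only [hT, Finset.mem_Icc] at hh1 hh2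
    have hi : h1 + (a - h2) < a := by omega
    apply hno _ hi
    intro j hj
    have hm : a - h2 + j < K := by omega
    have := congrFun heq ⟨a - h2 + j, hm⟩
    simp only [hf] at this
    have e1 : h1 + (a - h2) + j = h1 + (a - h2 + j) := by omega
    have e2 : h2 + (a - h2 + j) = a + j := by omega
    rw [e1, this, e2]
  have hinj : Set.InjOn f T := by
    intro x hx y hy hxy
    rcases lt_trichotomy x y with h | h | h
    · exact absurd hxy (key x hx y hy h)
    · exact h
    · exact absurd hxy.symm (key y hy x hx h)
  have hsub : T ⊆ Finset.range (n + 1 - K) := by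
    intro x hx
    simp only [hT, Finset.mem_Icc] at hx
    simp only [Finset.mem_range]
    omega
  have h1 : T.card = K - (b - a) := by
    simp only [hT, Nat.card_Icc]; omega
  calc K - (b - a) = T.card := h1.symm
    _ = (T.image f).card := (Finset.card_image_of_injOn hinj).symm
    _ ≤ ((Finset.range (n + 1 - K)).image f).card :=
        Finset.card_le_card (Finset.image_subset_image hsub)
    _ = numDistinctSubstrings s n K := rfl
end

section
/- Let s be a string of length n, let g ≥ 1 and M ≥ 1, and let P be a finite set of positions such that: (i) every p ∈ P satisfies p ≥ g − 1 and p + M + g ≤ n; (ii) for every p ∈ P, the substring s[p..p+M) has no occurrence in s at any position i < p; and (iii) any two distinct elements of P differ by at least g. Then |P| · g ≤ d_{M+g}(s), the number of distinct substrings of s of length M + g. -/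
/-- If `P` is a set of positions, each at least `g - 1` and with `p + M + g ≤ n`, such
that each substring `s[p..p+M)` (for `p ∈ P`) has no occurrence at a smaller position
and any two distinct elements of `P` differ by at least `g`, then
`|P| * g ≤ d_{M+g}(s)`. -/
theorem stmt13 {α : Type*} [DecidableEq α] (s : ℕ → α) (n g M : ℕ)
    (hg : 1 ≤ g) (hM : 1 ≤ M) (P : Finset ℕ)
    (hrange : ∀ p ∈ P, g - 1 ≤ p ∧ p + M + g ≤ n)
    (hleft : ∀ p ∈ P, ∀ i < p, ¬(∀ j < M, s (i + j) = s (p + j)))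
    (hsep : ∀ p ∈ P, ∀ q ∈ P, p < q → p + g ≤ q) :
    P.card * g ≤ numDistinctSubstrings s n (M + g) := by
  classical
  set K := M + g with hK
  set F : ℕ × ℕ → (Fin K → α) := fun pt => fun j : Fin K => s (pt.1 - pt.2 + (j : ℕ))
    with hF
  have key : ∀ p ∈ P, ∀ t, t < g → ∀ q ∈ P, ∀ u, u < g →
      F (p, t) = F (q, u) → p ≤ q → (p, t) = (q, u) := by
    intro p hp t ht q hq u hu heq hpq
    have hpg : g - 1 ≤ p := (hrange p hp).1
    have hqg : g - 1 ≤ q := (hrange q hq).1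
    have hocc : ∀ c, c < g → ∀ j, j < M →
        s ((p - t) + c + j) = s ((q - u) + c + j) := by
      intro c hc j hj
      have hlt : c + j < K := by omega
      have h := congrFun heq ⟨c + j, hlt⟩
      simpa [F, ← Nat.add_assoc] using h
    rcases lt_or_eq_of_le hpq with hlt | rfl
    · exfalso
      have hpgq : p + g ≤ q := hsep p hp q hq hlt
      refine hleft q hq (p - t + u) (by omega) ?_
      intro j hj
      have h := hocc u hu j hj
      have e : q - u + u + j = q + j := by omega
      rw [e] at h
      exact h
    · -- p = q
      rcases lt_trichotomy t u with htu | rfl | hut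
      · exfalso
        refine hleft p hp (p - u + t) (by omega) ?_
        intro j hj
        have h := hocc t ht j hj
        have e : p - t + t + j = p + j := by omega
        rw [e] at h
        exact h.symm
      · rfl
      · exfalso
        refine hleft p hp (p - t + u) (by omega) ?_
        intro j hj
        have h := hocc u hu j hj
        have e : p - u + u + j = p + j := by omega
        rw [e] at h
        exact h
  have hinj : Set.InjOn F ((P ×ˢ Finset.range g : Finset (ℕ × ℕ)) : Set (ℕ × ℕ)) := by
    intro a ha b hb hab
    simp only [Finset.coe_product, Set.mem_prod, Finset.mem_coe, Finset.coe_range,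
      Set.mem_Iio] at ha hb
    rcases le_total a.1 b.1 with h | h
    · have := key a.1 ha.1 a.2 ha.2 b.1 hb.1 b.2 hb.2 (by simpa using hab) h
      exact Prod.ext (congrArg Prod.fst this) (congrArg Prod.snd this)
    · have := key b.1 hb.1 b.2 hb.2 a.1 ha.1 a.2 ha.2 (by simpa using hab.symm) h
      exact (Prod.ext (congrArg Prod.fst this) (congrArg Prod.snd this)).symm
  have hsub : (P ×ˢ Finset.range g).image F ⊆
      (Finset.range (n + 1 - K)).image (fun h => fun j : Fin K => s (h + (j : ℕ))) := by
    intro x hx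
    rcases Finset.mem_image.mp hx with ⟨pt, hpt, rfl⟩
    rcases Finset.mem_product.mp hpt with ⟨hp, ht⟩
    have h1 := (hrange pt.1 hp).2
    refine Finset.mem_image.mpr ⟨pt.1 - pt.2, Finset.mem_range.mpr (by omega), rfl⟩
  calc P.card * g = (P ×ˢ Finset.range g).card := by
        simp [Finset.card_product]
    _ = ((P ×ˢ Finset.range g).image F).card := (Finset.card_image_of_injOn hinj).symm
    _ ≤ numDistinctSubstrings s n K := Finset.card_le_card hsub
end
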